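/- arXiv:2510.20817 — 3 statements merged into one kernel-verified Lean document; each statement's English description precedes it below -/
import Mathlib

section
/- The identity J_{β,η}(π) = −(β+η)·D_KL(π‖G_{β,η}) + (β+η)·log ζ_{β,η} holds for every strictly positive pmf π. -/
open Real Finset

theorem kl_entropy_reg_identity {Y : Type*} [Fintype Y]
    (pref : Y → ℝ) (hpos : ∀ y, 0 < pref y) (hsum : ∑ y, pref y = 1)
    (R : Y → ℝ) (β η : ℝ) (hβ : 0 ≤ β) (hη : 0 ≤ η) (hβη : 0 < β + η)
    (ζ : ℝ) (hζ : ζ = ∑ y, pref y ^ (β / (β + η)) * exp (R y / (β + η)))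
    (G : Y → ℝ) (hG : ∀ y, G y = pref y ^ (β / (β + η)) * exp (R y / (β + η)) / ζ)
    (J : (Y → ℝ) → ℝ)
    (hJ : ∀ p : Y → ℝ, J p = (∑ y, p y * R y)
      - β * (∑ y, p y * log (p y / pref y))
      - η * (∑ y, p y * log (p y)))
    (p : Y → ℝ) (hp0 : ∀ y, 0 < p y) (hp1 : ∑ y, p y = 1) :
    J p = -(β + η) * (∑ y, p y * log (p y / G y)) + (β + η) * log ζ := by
  have hY : Nonempty Y := by
    by_contra h
    rw [not_nonempty_iff] at h
    simp [Finset.univ_eq_empty] at hp1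
  have hζpos : 0 < ζ := by
    rw [hζ]
    apply Finset.sum_pos
    · intro y _
      have := hpos y
      positivity
    · exact Finset.univ_nonempty
  have key : ∀ y, p y * log (p y / G y)
      = p y * log (p y) - (β/(β+η)) * (p y * log (pref y))
        - p y * R y / (β+η) + p y * log ζ := by
    intro y
    have hGpos : 0 < G y := by
      rw [hG y]
      have := hpos y
      positivity
    rw [log_div (hp0 y).ne' hGpos.ne', hG y,
      log_div (by have := hpos y; positivity) hζpos.ne',
      log_mul (by have := hpos y; positivity) (exp_pos _).ne',
      log_rpow (hpos y), log_exp]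
    ring
  have h1 : ∀ y, p y * log (p y / pref y) = p y * log (p y) - p y * log (pref y) := by
    intro y
    rw [log_div (hp0 y).ne' (hpos y).ne']; ring
  rw [hJ]
  simp only [key, h1]
  rw [Finset.sum_add_distrib, Finset.sum_sub_distrib, Finset.sum_sub_distrib,
    Finset.sum_sub_distrib, ← Finset.mul_sum, ← Finset.sum_div,
    ← Finset.sum_mul, hp1]
  field_simp
  ring
end

section
/- For the forward-KL-regularized objective on a finite type: if a maximizer π* exists among distributions supported within supp(π_ref) with π*(y) > 0 for all y ∈ supp(π_ref), then there exists Λ > max over supp(π_ref) of R(y) such that π*(y) = β·π_ref(y)/(Λ − R(y)) for all y ∈ supp(π_ref). -/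
open Real Finset

theorem fwd_kl_maximizer_form {Y : Type*} [Fintype Y]
    (pref : Y → ℝ) (hpos : ∀ y, 0 ≤ pref y) (hsum : ∑ y, pref y = 1)
    (R : Y → ℝ) (β : ℝ) (hβ : 0 < β)
    (Jfwd : (Y → ℝ) → ℝ)
    (hJ : ∀ p : Y → ℝ, Jfwd p = (∑ y, p y * R y)
      - β * ∑ y, pref y * log (pref y / p y))
    (pstar : Y → ℝ)
    (hstar0 : ∀ y, 0 ≤ pstar y) (hstar1 : ∑ y, pstar y = 1)
    (hstarpos : ∀ y, 0 < pref y → 0 < pstar y)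
    (hstaroff : ∀ y, pref y = 0 → pstar y = 0)
    (hmax : ∀ p : Y → ℝ, (∀ y, 0 ≤ p y) → (∑ y, p y = 1) →
      (∀ y, 0 < pref y → 0 < p y) → (∀ y, pref y = 0 → p y = 0) →
      Jfwd p ≤ Jfwd pstar) :
    ∃ Λ : ℝ, (∀ y, 0 < pref y → R y < Λ) ∧
      ∀ y, 0 < pref y → pstar y = β * pref y / (Λ - R y) := by
  classical
  -- support is nonempty
  obtain ⟨y0, hy0⟩ : ∃ y, 0 < pref y := by
    by_contra h
    push_neg at h
    have : ∑ y, pref y = 0 :=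
      Finset.sum_eq_zero fun y _ => le_antisymm (h y) (hpos y)
    rw [hsum] at this; norm_num at this
  set C : Y → ℝ := fun y => R y + β * pref y / pstar y with hC
  have key : ∀ y1 y2 : Y, 0 < pref y1 → 0 < pref y2 → ¬ C y2 < C y1 := by
    intro y1 y2 h1 h2 hlt
    have a1 : 0 < pstar y1 := hstarpos _ h1
    have a2 : 0 < pstar y2 := hstarpos _ h2
    have hne : y1 ≠ y2 := by rintro rfl; exact lt_irrefl _ hlt
    set F : ℝ → ℝ := fun ε =>
      (R y1 - R y2) + β * pref y1 / (pstar y1 + ε) - β * pref y2 / (pstar y2 - ε) with hF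
    have hF0 : 0 < F 0 := by
      have : F 0 = C y1 - C y2 := by simp [hF, hC]; ring
      rw [this]; linarith
    have hcont : ContinuousAt F 0 := by
      apply ContinuousAt.sub
      · apply ContinuousAt.add continuousAt_const
        exact continuousAt_const.div (continuousAt_const.add continuousAt_id)
          (by simpa using a1.ne')
      · exact continuousAt_const.div (continuousAt_const.sub continuousAt_id)
          (by simpa using a2.ne')
    have hev : ∀ᶠ ε in nhdsWithin (0:ℝ) (Set.Ioi 0), 0 < F ε ∧ ε < pstar y2 ∧ 0 < ε := by
      filter_upwards [nhdsWithin_le_nhds (hcont.eventually (eventually_gt_nhds hF0)),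
        nhdsWithin_le_nhds (eventually_lt_nhds a2), self_mem_nhdsWithin] with ε hε1 hε2 hε3
      exact ⟨hε1, hε2, hε3⟩
    obtain ⟨ε, hFε, hεa2, hε0⟩ := hev.exists
    set p : Y → ℝ := fun y =>
      pstar y + (if y = y1 then ε else 0) - (if y = y2 then ε else 0) with hp
    have hp1 : p y1 = pstar y1 + ε := by simp [hp, hne]
    have hp2 : p y2 = pstar y2 - ε := by simp [hp, hne.symm]
    have hpoth : ∀ y, y ≠ y1 → y ≠ y2 → p y = pstar y := by
      intro y hy1 hy2; simp [hp, hy1, hy2]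
    have hp1pos : 0 < p y1 := by rw [hp1]; linarith
    have hp2pos : 0 < p y2 := by rw [hp2]; linarith
    have hppos : ∀ y, 0 < pref y → 0 < p y := by
      intro y hy
      rcases eq_or_ne y y1 with rfl | hy1
      · exact hp1pos
      rcases eq_or_ne y y2 with rfl | hy2
      · exact hp2pos
      · rw [hpoth y hy1 hy2]; exact hstarpos y hy
    have hpoff : ∀ y, pref y = 0 → p y = 0 := by
      intro y hy
      have hy1 : y ≠ y1 := by rintro rfl; exact absurd hy h1.ne'
      have hy2 : y ≠ y2 := by rintro rfl; exact absurd hy h2.ne'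
      rw [hpoth y hy1 hy2]; exact hstaroff y hy
    have hpnn : ∀ y, 0 ≤ p y := by
      intro y
      rcases (hpos y).lt_or_eq with hy | hy
      · exact (hppos y hy).le
      · rw [hpoff y hy.symm]
    have hpsum : ∑ y, p y = 1 := by
      simp [hp, Finset.sum_add_distrib, Finset.sum_sub_distrib,
        Finset.sum_ite_eq', hstar1]
    -- compare Jfwd p with Jfwd pstar
    set g : Y → ℝ := fun y => (p y - pstar y) * R y
      - β * (pref y * (log (pref y / p y) - log (pref y / pstar y))) with hg
    have hdiff : Jfwd p - Jfwd pstar = ∑ y, g y := by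
      rw [hJ p, hJ pstar, hg]
      rw [Finset.sum_sub_distrib]
      rw [show (∑ y, (p y - pstar y) * R y) = ∑ y, (p y * R y - pstar y * R y) by
        apply Finset.sum_congr rfl; intros; ring]
      rw [show (∑ y, β * (pref y * (log (pref y / p y) - log (pref y / pstar y))))
          = β * ∑ y, (pref y * log (pref y / p y) - pref y * log (pref y / pstar y)) by
        rw [Finset.mul_sum]; apply Finset.sum_congr rfl; intros; ring]
      rw [Finset.sum_sub_distrib, Finset.sum_sub_distrib]
      ring
    have hgzero : ∀ y ∈ Finset.univ, y ∉ ({y1, y2} : Finset Y) → g y = 0 := by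
      intro y _ hy
      simp only [Finset.mem_insert, Finset.mem_singleton, not_or] at hy
      simp [hg, hpoth y hy.1 hy.2]
    have hgsum : ∑ y, g y = g y1 + g y2 := by
      rw [← Finset.sum_subset (Finset.subset_univ ({y1, y2} : Finset Y)) hgzero,
        Finset.sum_pair hne]
    -- log bounds
    have hlog1 : log (pstar y1) - log (p y1) ≤ -(ε / p y1) := by
      have := Real.log_le_sub_one_of_pos (x := pstar y1 / p y1) (by positivity)
      rw [Real.log_div a1.ne' hp1pos.ne'] at this
      have h' : pstar y1 / p y1 - 1 = -(ε / p y1) := by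
        field_simp; rw [hp1]; ring
      linarith
    have hlog2 : log (pstar y2) - log (p y2) ≤ ε / p y2 := by
      have := Real.log_le_sub_one_of_pos (x := pstar y2 / p y2) (by positivity)
      rw [Real.log_div a2.ne' hp2pos.ne'] at this
      have h' : pstar y2 / p y2 - 1 = ε / p y2 := by
        field_simp; rw [hp2]; ring
      linarith
    have hg1 : ε * R y1 + β * pref y1 * (ε / p y1) ≤ g y1 := by
      have e1 : log (pref y1 / p y1) - log (pref y1 / pstar y1)
          = log (pstar y1) - log (p y1) := by
        rw [Real.log_div h1.ne' hp1pos.ne', Real.log_div h1.ne' a1.ne']; ring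
      have hr : g y1 = (p y1 - pstar y1) * R y1
          - β * (pref y1 * (log (pref y1 / p y1) - log (pref y1 / pstar y1))) := rfl
      have : g y1 = ε * R y1 - β * (pref y1 * (log (pstar y1) - log (p y1))) := by
        rw [hr, e1, hp1]; ring
      rw [this]
      have := mul_le_mul_of_nonneg_left hlog1 (by positivity : (0:ℝ) ≤ β * pref y1)
      nlinarith [this]
    have hg2 : -(ε * R y2) - β * pref y2 * (ε / p y2) ≤ g y2 := by
      have e2 : log (pref y2 / p y2) - log (pref y2 / pstar y2)
          = log (pstar y2) - log (p y2) := by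
        rw [Real.log_div h2.ne' hp2pos.ne', Real.log_div h2.ne' a2.ne']; ring
      have hr : g y2 = (p y2 - pstar y2) * R y2
          - β * (pref y2 * (log (pref y2 / p y2) - log (pref y2 / pstar y2))) := rfl
      have : g y2 = -(ε * R y2) - β * (pref y2 * (log (pstar y2) - log (p y2))) := by
        rw [hr, e2, hp2]; ring
      rw [this]
      have := mul_le_mul_of_nonneg_left hlog2 (by positivity : (0:ℝ) ≤ β * pref y2)
      nlinarith [this]
    have hpos' : 0 < g y1 + g y2 := by
      have hεF : 0 < ε * F ε := mul_pos hε0 hFε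
      have hFe : ε * F ε = ε * R y1 + β * pref y1 * (ε / p y1)
          + (-(ε * R y2) - β * pref y2 * (ε / p y2)) := by
        rw [hF, hp1, hp2]; ring
      exact lt_of_lt_of_le (hFe ▸ hεF) (add_le_add hg1 hg2)
    have hle := hmax p hpnn hpsum hppos hpoff
    rw [hgsum] at hdiff
    linarith
  refine ⟨C y0, ?_, ?_⟩
  · intro y hy
    have hCeq : C y = C y0 :=
      le_antisymm (not_lt.mp (key y y0 hy hy0)) (not_lt.mp (key y0 y hy0 hy))
    have hq : 0 < β * pref y / pstar y := by
      have := hstarpos y hy; positivity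
    have h2 : C y0 - R y = β * pref y / pstar y := by rw [← hCeq, hC]; ring
    have h3 : 0 < C y0 - R y := by rw [h2]; exact hq
    exact sub_pos.mp h3
  · intro y hy
    have hCeq : C y = C y0 :=
      le_antisymm (not_lt.mp (key y y0 hy hy0)) (not_lt.mp (key y0 y hy0 hy))
    have hps := hstarpos y hy
    have hΛ : C y0 - R y = β * pref y / pstar y := by rw [← hCeq, hC]; ring
    have hbp : β * pref y ≠ 0 := by positivity
    rw [hΛ, div_div_eq_mul_div, mul_div_cancel_left₀ _ hbp]
end

section
/- Off-support mass is suboptimal for forward-KL regularization: suppose the reward R is bounded with maximum R_max attained at some point in the support of π_ref. Then for any pmf π placing positive mass outside supp(π_ref), there exists a pmf π′ supported within supp(π_ref) with J_fwd(π′) > J_fwd(π). -/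
open Real Finset

theorem off_support_mass_suboptimal {Y : Type*} [Fintype Y]
    (pref : Y → ℝ) (hpos : ∀ y, 0 ≤ pref y) (hsum : ∑ y, pref y = 1)
    (R : Y → ℝ) (β : ℝ) (hβ : 0 < β)
    (y₀ : Y) (hy₀pos : 0 < pref y₀) (hy₀max : ∀ y, R y ≤ R y₀)
    (p : Y → ℝ) (hp0 : ∀ y, 0 ≤ p y) (hp1 : ∑ y, p y = 1)
    (hpsupp : ∀ y, 0 < pref y → 0 < p y)
    (hoff : ∃ y, pref y = 0 ∧ 0 < p y) :
    ∃ p' : Y → ℝ, (∀ y, 0 ≤ p' y) ∧ (∑ y, p' y = 1) ∧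
      (∀ y, pref y = 0 → p' y = 0) ∧ (∀ y, 0 < pref y → 0 < p' y) ∧
      ((∑ y, p y * R y) - β * ∑ y, pref y * log (pref y / p y))
        < ((∑ y, p' y * R y) - β * ∑ y, pref y * log (pref y / p' y)) := by
  classical
  set m : ℝ := ∑ y, if pref y = 0 then p y else 0 with hm_def
  obtain ⟨z, hz0, hzp⟩ := hoff
  have hm : 0 < m := by
    apply Finset.sum_pos' (fun y _ => by split_ifs with h; exacts [hp0 y, le_refl 0])
    exact ⟨z, Finset.mem_univ z, by simp [hz0, hzp]⟩
  have hpy₀ : 0 < p y₀ := hpsupp y₀ hy₀pos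
  have hy₀ne : pref y₀ ≠ 0 := ne_of_gt hy₀pos
  set p' : Y → ℝ := fun y => if pref y = 0 then 0 else if y = y₀ then p y₀ + m else p y
    with hp'_def
  have hp'nonneg : ∀ y, 0 ≤ p' y := by
    intro y
    simp only [hp'_def]
    split_ifs with h1 h2
    · exact le_refl 0
    · positivity
    · exact hp0 y
  have hp'point : ∀ y, p' y = p y + (if y = y₀ then m else 0)
      - (if pref y = 0 then p y else 0) := by
    intro y
    by_cases h : pref y = 0
    · have : y ≠ y₀ := fun he => hy₀ne (he ▸ h)
      simp [hp'_def, h, this]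
    · by_cases hy : y = y₀
      · subst hy; simp [hp'_def, h]
      · simp [hp'_def, h, hy]
  have hp'sum : ∑ y, p' y = 1 := by
    simp only [hp'point]
    rw [Finset.sum_sub_distrib, Finset.sum_add_distrib, hp1,
      Finset.sum_ite_eq' Finset.univ y₀ (fun _ => m), if_pos (Finset.mem_univ y₀), ← hm_def]
    ring
  have hp'zero : ∀ y, pref y = 0 → p' y = 0 := fun y h => by simp [hp'_def, h]
  have hp'pos : ∀ y, 0 < pref y → 0 < p' y := by
    intro y hy
    have h : pref y ≠ 0 := ne_of_gt hy
    by_cases hy0 : y = y₀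
    · subst hy0; simp [hp'_def, h]; positivity
    · simp [hp'_def, h, hy0]; exact hpsupp y hy
  refine ⟨p', hp'nonneg, hp'sum, hp'zero, hp'pos, ?_⟩
  -- reward part
  have hR : ∑ y, p' y * R y
      = (∑ y, p y * R y) + m * R y₀ - ∑ y, (if pref y = 0 then p y * R y else 0) := by
    have : ∀ y, p' y * R y = p y * R y + (if y = y₀ then m * R y₀ else 0)
        - (if pref y = 0 then p y * R y else 0) := by
      intro y
      rw [hp'point y]
      by_cases hy : y = y₀
      · subst hy
        by_cases h : pref y = 0 <;> simp [h] <;> ring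
      · by_cases h : pref y = 0 <;> simp [hy, h] <;> ring
    simp only [this]
    rw [Finset.sum_sub_distrib, Finset.sum_add_distrib,
      Finset.sum_ite_eq' Finset.univ y₀ (fun _ => m * R y₀), if_pos (Finset.mem_univ y₀)]
  have hT : ∑ y, (if pref y = 0 then p y * R y else 0) ≤ m * R y₀ := by
    calc ∑ y, (if pref y = 0 then p y * R y else 0)
        ≤ ∑ y, (if pref y = 0 then p y * R y₀ else 0) := by
          apply Finset.sum_le_sum
          intro y _
          split_ifs
          · exact mul_le_mul_of_nonneg_left (hy₀max y) (hp0 y)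
          · exact le_refl 0
      _ = m * R y₀ := by
          rw [hm_def, Finset.sum_mul]
          exact Finset.sum_congr rfl (fun y _ => by split_ifs <;> simp)
  -- KL part
  set Δ : ℝ := pref y₀ * (log (pref y₀ / (p y₀ + m)) - log (pref y₀ / p y₀)) with hΔ_def
  have hΔneg : Δ < 0 := by
    apply mul_neg_of_pos_of_neg hy₀pos
    rw [sub_neg]
    apply Real.log_lt_log (by positivity)
    exact div_lt_div_of_pos_left hy₀pos hpy₀ (by linarith)
  have hK : ∑ y, pref y * log (pref y / p' y)
      = (∑ y, pref y * log (pref y / p y)) + Δ := by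
    have : ∀ y, pref y * log (pref y / p' y)
        = pref y * log (pref y / p y) + (if y = y₀ then Δ else 0) := by
      intro y
      by_cases h : pref y = 0
      · have : y ≠ y₀ := fun he => hy₀ne (he ▸ h)
        simp [h, this]
      · by_cases hy : y = y₀
        · subst hy
          simp only [hp'_def, if_neg h, if_pos rfl, if_pos, hΔ_def]
          ring
        · simp [hp'_def, h, hy]
    simp only [this]
    rw [Finset.sum_add_distrib,
      Finset.sum_ite_eq' Finset.univ y₀ (fun _ => Δ), if_pos (Finset.mem_univ y₀)]
  rw [hR, hK]
  have hRy₀ : 0 ≤ m * R y₀ - ∑ y, (if pref y = 0 then p y * R y else 0) := by linarith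
  nlinarith [mul_pos hβ (neg_pos.mpr hΔneg)]
end
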